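/- There is a unique formal power series u ∈ ℤ[[y]] with constant term 1 satisfying u² − 4y·u − 1 = 0. Moreover u is a unit of ℤ[[y]] with u⁻¹ = u − 4y, and u ≡ 1 modulo the ideal 2·ℤ[[y]] (every coefficient of u except the constant term is even). -/

import Mathlib

open PowerSeries

private def cc : ℕ → ℤ
  | 0 => 0
  | (n+1) => (if n = 0 then 1 else 0) + 2 * cc n
      - ∑ i ∈ (Finset.range n).attach, cc (i.1+1) * cc (n - i.1)
  decreasing_by
  all_goals first
    | omega
    | (have h := i.2; simp only [Finset.mem_range] at h; omega)

private noncomputable def Wps : PowerSeries ℤ := PowerSeries.mk cc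

private lemma cc_zero : cc 0 = 0 := by rw [cc]

private lemma cc_succ (n : ℕ) : cc (n+1) = (if n = 0 then 1 else 0) + 2 * cc n
    - ∑ i ∈ Finset.range n, cc (i+1) * cc (n - i) := by
  rw [cc, Finset.sum_attach (Finset.range n) (fun i => cc (i+1) * cc (n - i))]

private lemma Wps_eq : Wps + Wps * Wps = PowerSeries.X + (PowerSeries.X * Wps + PowerSeries.X * Wps) := by
  ext n
  rcases n with _ | m
  · simp [Wps, cc_zero, PowerSeries.coeff_mul]
  · rw [map_add, map_add, map_add, PowerSeries.coeff_succ_X_mul, PowerSeries.coeff_mul]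
    simp only [Wps, PowerSeries.coeff_mk, PowerSeries.coeff_X]
    rw [Finset.Nat.sum_antidiagonal_eq_sum_range_succ_mk, Finset.sum_range_succ',
      Finset.sum_range_succ]
    simp only [Nat.sub_self, cc_zero, Nat.sub_zero, mul_zero, zero_mul, add_zero]
    have hsum : ∑ i ∈ Finset.range m, cc (i+1) * cc (m + 1 - (i+1)) =
        ∑ i ∈ Finset.range m, cc (i+1) * cc (m - i) := by
      refine Finset.sum_congr rfl fun i hi => ?_
      congr 2
      omega
    rw [hsum, cc_succ m]
    have hif : (m + 1 = 1) ↔ (m = 0) := by omega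
    simp only [hif]
    ring

theorem exists_unique_root_and_properties :
    (∃! u : PowerSeries ℤ, constantCoeff u = 1 ∧
        u ^ 2 - 4 * PowerSeries.X * u - 1 = 0) ∧
    ∀ u : PowerSeries ℤ, constantCoeff u = 1 →
      u ^ 2 - 4 * PowerSeries.X * u - 1 = 0 →
        IsUnit u ∧ u * (u - 4 * PowerSeries.X) = 1 ∧
          ∀ k : ℕ, k ≠ 0 → 2 ∣ coeff k u := by
  have hu0 : constantCoeff (1 + 2 * Wps) = 1 := by
    simp [Wps, cc_zero, PowerSeries.constantCoeff_mk]
  have hu : (1 + 2 * Wps) ^ 2 - 4 * PowerSeries.X * (1 + 2 * Wps) - 1 = 0 := by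
    linear_combination (4 : PowerSeries ℤ) * Wps_eq
  constructor
  · refine ⟨1 + 2 * Wps, ⟨hu0, hu⟩, ?_⟩
    rintro v ⟨hv0, hv⟩
    have hfac : (v - (1 + 2 * Wps)) * (v + (1 + 2 * Wps) - 4 * PowerSeries.X) = 0 := by
      linear_combination hv - hu
    rcases mul_eq_zero.mp hfac with h | h
    · exact sub_eq_zero.mp h
    · exfalso
      have := congrArg (constantCoeff) h
      simp [hv0, hu0] at this
  · intro u hu0' hu'
    have hmul : u * (u - 4 * PowerSeries.X) = 1 := by linear_combination hu'
    refine ⟨IsUnit.of_mul_eq_one _ hmul, hmul, ?_⟩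
    intro k hk
    set v := PowerSeries.map (Int.castRingHom (ZMod 2)) u with hv
    have h2 : (2 : PowerSeries (ZMod 2)) = 0 := by
      rw [(map_ofNat (PowerSeries.C (R := ZMod 2)) 2).symm,
        show (2 : ZMod 2) = 0 from rfl, map_zero]
    have hmap := congrArg (PowerSeries.map (Int.castRingHom (ZMod 2))) hu'
    simp only [map_sub, map_mul, map_pow, map_one, map_zero, map_ofNat,
      PowerSeries.map_X] at hmap
    rw [← hv] at hmap
    have hsq : (v - 1) ^ 2 = 0 := by
      linear_combination hmap + (2 * PowerSeries.X * v - v + 1) * h2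
    have hv1 : v = 1 := by
      have := pow_eq_zero_iff (n := 2) (by norm_num) |>.mp hsq
      exact sub_eq_zero.mp this
    have hc : ((coeff k u : ℤ) : ZMod 2) = 0 := by
      have := congrArg (PowerSeries.coeff k) hv1
      simpa [hv, PowerSeries.coeff_map, PowerSeries.coeff_one, hk] using this
    exact (ZMod.intCast_zmod_eq_zero_iff_dvd _ 2).mp hc
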